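/- For p > 1 and any n points z_1, ..., z_n on the unit circle, there exists z_0 of modulus 1 such that Σ_j 1/|z_0 - z_j|^p ≤ (3e)^p · ζ(p) · n^p. -/

import Mathlib

open Real Finset

private noncomputable def rr (N : ℕ) (a : ℝ) (i : ℕ) : ℝ :=
  (i : ℝ) - a - N * round (((i : ℝ) - a) / N)

private lemma abs_exp_sub_exp (a b : ℝ) :
    ‖Complex.exp (a * Complex.I) - Complex.exp (b * Complex.I)‖
      = 2 * |Real.sin ((a - b) / 2)| := by
  have key : ∀ d : ℂ, Complex.exp (d * Complex.I) - Complex.exp (-d * Complex.I)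
      = 2 * Complex.sin d * Complex.I := by
    intro d
    rw [Complex.exp_mul_I, Complex.exp_mul_I, Complex.cos_neg, Complex.sin_neg]
    ring
  have h : Complex.exp (a * Complex.I) - Complex.exp (b * Complex.I)
      = Complex.exp ((((a:ℂ) + b) / 2) * Complex.I)
        * (2 * Complex.sin (((a:ℂ) - b) / 2) * Complex.I) := by
    rw [← key, mul_sub, ← Complex.exp_add, ← Complex.exp_add]
    have e1 : (((a:ℂ) + b) / 2) * Complex.I + (((a:ℂ) - b) / 2) * Complex.I
        = (a:ℂ) * Complex.I := by ring
    have e2 : (((a:ℂ) + b) / 2) * Complex.I + (-(((a:ℂ) - b) / 2)) * Complex.I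
        = (b:ℂ) * Complex.I := by ring
    rw [e1, e2]
  have hc : (((a:ℂ) + b) / 2) = ((((a + b) / 2 : ℝ)) : ℂ) := by push_cast; ring
  have hd : (((a:ℂ) - b) / 2) = ((((a - b) / 2 : ℝ)) : ℂ) := by push_cast; ring
  rw [h, norm_mul, hc, Complex.norm_exp_ofReal_mul_I, one_mul, norm_mul, norm_mul,
    Complex.norm_two, Complex.norm_I, mul_one, hd, ← Complex.ofReal_sin, Complex.norm_real,
    Real.norm_eq_abs]

private lemma rr_abs_le {N : ℕ} (hN : 0 < N) (a : ℝ) (i : ℕ) : |rr N a i| ≤ N / 2 := by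
  have hN' : (0:ℝ) < N := by exact_mod_cast hN
  have h := abs_sub_round (((i : ℝ) - a) / N)
  have : rr N a i = N * (((i : ℝ) - a) / N - round (((i : ℝ) - a) / N)) := by
    rw [rr]; field_simp
  rw [this, abs_mul, abs_of_pos hN']
  nlinarith [abs_nonneg (((i : ℝ) - a) / N - round (((i : ℝ) - a) / N))]

private lemma rr_inj {N : ℕ} (hN : 0 < N) (a : ℝ) {i i' : ℕ} (hi : i < N) (hi' : i' < N)
    (h : |rr N a i - rr N a i'| < 1) : i = i' := by
  set m := round (((i : ℝ) - a) / N)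
  set m' := round (((i' : ℝ) - a) / N)
  have hq : rr N a i - rr N a i' = (((i : ℤ) - i' - N * (m - m') : ℤ) : ℝ) := by
    simp only [rr]
    push_cast
    ring
  rw [hq] at h
  have h1 : |((i : ℤ) - i' - N * (m - m'))| < 1 := by exact_mod_cast h
  rw [abs_lt] at h1
  have h3 : (i : ℤ) - i' = N * (m - m') := by omega
  have hNZ : (0:ℤ) < N := by exact_mod_cast hN
  have hb1 : (i : ℤ) < N := by exact_mod_cast hi
  have hb2 : (i' : ℤ) < N := by exact_mod_cast hi'
  have hb3 : (0:ℤ) ≤ (i:ℤ) := Int.natCast_nonneg i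
  have hb4 : (0:ℤ) ≤ (i':ℤ) := Int.natCast_nonneg i'
  have hd : m - m' = 0 := by
    rcases lt_trichotomy (m - m') 0 with hlt | heq | hgt
    · nlinarith
    · exact heq
    · nlinarith
  rw [hd, mul_zero, sub_eq_zero] at h3
  exact_mod_cast h3

private lemma chord_ge {N : ℕ} (hN : 0 < N) (θ : ℝ) (i : ℕ) :
    4 * |rr N (θ * N / (2 * π)) i| / N
      ≤ ‖Complex.exp ((2 * π * i / N : ℝ) * Complex.I)
          - Complex.exp (θ * Complex.I)‖ := by
  have hN' : (0:ℝ) < N := by exact_mod_cast hN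
  set a := θ * N / (2 * π) with ha
  set r := rr N a i with hrdef
  set m := round (((i : ℝ) - a) / N) with hm
  rw [abs_exp_sub_exp]
  have harg : (2 * π * i / N - θ) / 2 = π * r / N + m * π := by
    rw [hrdef, rr, ← hm, ha]
    field_simp
    ring
  rw [harg, Real.sin_add_int_mul_pi, abs_mul]
  have hpm : |((-1:ℝ)) ^ m| = 1 := by
    rcases Int.even_or_odd m with he | ho
    · rw [he.neg_one_zpow, abs_one]
    · rw [ho.neg_one_zpow, abs_neg, abs_one]
  rw [hpm, one_mul]
  have hr2 : |r| ≤ N / 2 := rr_abs_le hN a i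
  have hx0 : 0 ≤ π * |r| / N := by positivity
  have hx1 : π * |r| / N ≤ π / 2 := by
    rw [div_le_div_iff₀ hN' (by norm_num : (0:ℝ) < 2)]
    nlinarith [pi_pos]
  have hpi2 : π / 2 ≤ π := by linarith [pi_pos]
  have hsin : |Real.sin (π * r / N)| = Real.sin (π * |r| / N) := by
    rcases abs_cases r with ⟨h1, h2⟩ | ⟨h1, h2⟩
    · rw [h1]
      exact abs_of_nonneg (Real.sin_nonneg_of_nonneg_of_le_pi (by positivity)
        (by rw [h1] at hx1; linarith))
    · rw [h1]
      have hneg : π * -r / N = -(π * r / N) := by ring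
      rw [hneg, Real.sin_neg]
      apply abs_of_nonpos
      apply Real.sin_nonpos_of_nonpos_of_neg_pi_le
      · apply div_nonpos_of_nonpos_of_nonneg _ (le_of_lt hN')
        nlinarith [pi_pos]
      · rw [h1] at hx1
        rw [hneg] at hx1
        linarith
  rw [hsin]
  have hms := Real.mul_le_sin hx0 hx1
  have hpi : π ≠ 0 := pi_ne_zero
  have h4 : 2 / π * (π * |r| / N) = 2 * |r| / N := by field_simp
  rw [h4] at hms
  have h5 : 4 * |r| / (N:ℝ) = 2 * (2 * |r| / (N:ℝ)) := by ring
  rw [h5]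
  exact mul_le_mul_of_nonneg_left hms (by norm_num)

/-- For p > 1 and n points on the unit circle, there exists z₀ of modulus 1 with
∑ⱼ 1/|z₀ - zⱼ|ᵖ ≤ (3e)ᵖ·ζ(p)·nᵖ, where ζ(p) = ∑_{k≥1} 1/kᵖ. -/
theorem chebyshev_Lp_upper_bound_p_gt_one (n : ℕ) (p : ℝ) (hp : 1 < p)
    (z : Fin n → ℂ) (hz : ∀ j, ‖z j‖ = 1) :
    ∃ z₀ : ℂ, ‖z₀‖ = 1 ∧
      ∑ j, 1 / ‖z₀ - z j‖ ^ p
        ≤ (3 * Real.exp 1) ^ p * (∑' k : ℕ, 1 / ((k : ℝ) + 1) ^ p) * (n : ℝ) ^ p := by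
  classical
  have hp0 : 0 < p := lt_trans one_pos hp
  set T := ∑' k : ℕ, 1 / ((k : ℝ) + 1) ^ p with hT
  have hTsummable : Summable (fun k : ℕ => 1 / ((k : ℝ) + 1) ^ p) := by
    have h1 : Summable (fun k : ℕ => 1 / (k : ℝ) ^ p) :=
      Real.summable_one_div_nat_rpow.2 hp
    have h2 : Summable ((fun k : ℕ => 1 / (k:ℝ) ^ p) ∘ (fun k : ℕ => k + 1)) :=
      h1.comp_injective (add_left_injective 1)
    have h3 : (fun k : ℕ => 1 / ((k:ℝ) + 1) ^ p)
        = (fun k : ℕ => 1 / (k:ℝ) ^ p) ∘ (fun k : ℕ => k + 1) := by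
      funext k
      simp only [Function.comp_apply]
      push_cast
      ring
    rw [h3]
    exact h2
  have hT0 : 0 ≤ T := tsum_nonneg (fun k => by positivity)
  rcases Nat.eq_zero_or_pos n with hn | hn
  · subst hn
    refine ⟨1, by simp, ?_⟩
    simp [Real.zero_rpow (ne_of_gt hp0)]
  -- main case
  set N := 4 * n + 1 with hNdef
  have hN : 0 < N := by omega
  have hN' : (0:ℝ) < N := by exact_mod_cast hN
  set θ : Fin n → ℝ := fun j => (z j).arg with hθ
  have hzj : ∀ j, z j = Complex.exp ((θ j : ℝ) * Complex.I) := by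
    intro j
    have := Complex.norm_mul_exp_arg_mul_I (z j)
    rw [hz j] at this
    simpa using this.symm
  set R : Fin N → Fin n → ℝ := fun i j => rr N (θ j * N / (2 * π)) (i : ℕ) with hRdef
  set w : Fin N → ℂ := fun i => Complex.exp ((2 * π * (i : ℕ) / N : ℝ) * Complex.I) with hw
  have hw1 : ∀ i, ‖w i‖ = 1 := fun i => Complex.norm_exp_ofReal_mul_I _
  have hchord : ∀ (i : Fin N) (j : Fin n),
      4 * |R i j| / N ≤ ‖w i - z j‖ := by
    intro i j
    rw [hzj j]
    exact chord_ge hN (θ j) (i : ℕ)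
  set good : Finset (Fin N) :=
    Finset.univ.filter (fun i => ∀ j, (1:ℝ)/2 ≤ |R i j|) with hgood
  -- cardinality of good
  have hcard_one : ∀ j : Fin n,
      (Finset.univ.filter (fun i : Fin N => |R i j| < 1/2)).card ≤ 1 := by
    intro j
    rw [Finset.card_le_one]
    intro i hi i' hi'
    rw [Finset.mem_filter] at hi hi'
    have hdiff : |R i j - R i' j| < 1 := by
      calc |R i j - R i' j| ≤ |R i j| + |R i' j| := abs_sub _ _
        _ < 1 := by linarith [hi.2, hi'.2]
    exact Fin.ext (rr_inj hN _ i.isLt i'.isLt hdiff)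
  have hbadcard : (Finset.univ.filter (fun i : Fin N => ¬ ∀ j, (1:ℝ)/2 ≤ |R i j|)).card ≤ n := by
    have hsub : Finset.univ.filter (fun i : Fin N => ¬ ∀ j, (1:ℝ)/2 ≤ |R i j|)
        ⊆ Finset.univ.biUnion (fun j : Fin n =>
            Finset.univ.filter (fun i : Fin N => |R i j| < 1/2)) := by
      intro i hi
      rw [Finset.mem_filter] at hi
      push_neg at hi
      obtain ⟨j, hj⟩ := hi.2
      rw [Finset.mem_biUnion]
      exact ⟨j, Finset.mem_univ j, Finset.mem_filter.2 ⟨Finset.mem_univ i, hj⟩⟩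
    calc (Finset.univ.filter (fun i : Fin N => ¬ ∀ j, (1:ℝ)/2 ≤ |R i j|)).card
        ≤ (Finset.univ.biUnion (fun j : Fin n =>
            Finset.univ.filter (fun i : Fin N => |R i j| < 1/2))).card :=
          Finset.card_le_card hsub
      _ ≤ ∑ j : Fin n, (Finset.univ.filter (fun i : Fin N => |R i j| < 1/2)).card :=
          Finset.card_biUnion_le
      _ ≤ ∑ _j : Fin n, 1 := Finset.sum_le_sum (fun j _ => hcard_one j)
      _ = n := by simp
  have hgoodcard : 3 * n + 1 ≤ good.card := by
    have := Finset.card_filter_add_card_filter_not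
      (s := (Finset.univ : Finset (Fin N))) (p := fun i => ∀ j, (1:ℝ)/2 ≤ |R i j|)
    have huniv : (Finset.univ : Finset (Fin N)).card = N := by simp
    rw [hgood]
    omega
  have hgoodne : good.Nonempty := Finset.card_pos.1 (by omega)
  -- per-j bound
  have hperj : ∀ j : Fin n,
      ∑ i ∈ good, 1 / ‖w i - z j‖ ^ p ≤ 2 * ((N:ℝ) ^ p * T) := by
    intro j
    set K : Fin N → ℕ := fun i => ⌈2 * |R i j|⌉₊ - 1 with hK
    set G : ℕ → ℝ := fun k => (N:ℝ) ^ p * (1 / ((k : ℝ) + 1) ^ p) with hG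
    have hG0 : ∀ k, 0 ≤ G k := fun k => by positivity
    have hGsummable : Summable G := hTsummable.mul_left _
    have hKceil : ∀ i ∈ good, ((K i : ℝ) + 1) = (⌈2 * |R i j|⌉₊ : ℝ) := by
      intro i hi
      rw [hgood, Finset.mem_filter] at hi
      have h12 : (1:ℝ)/2 ≤ |R i j| := hi.2 j
      have h1 : 1 ≤ ⌈2 * |R i j|⌉₊ := Nat.one_le_ceil_iff.2 (by linarith)
      rw [hK]
      push_cast [Nat.cast_sub h1]
      ring
    have hstep1 : ∀ i ∈ good, 1 / ‖w i - z j‖ ^ p ≤ G (K i) := by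
      intro i hi
      have hmem := hi
      rw [hgood, Finset.mem_filter] at hmem
      have h12 : (1:ℝ)/2 ≤ |R i j| := hmem.2 j
      have hceil_le : ((⌈2 * |R i j|⌉₊ : ℝ)) ≤ 4 * |R i j| := by
        have := Nat.ceil_lt_add_one (by positivity : (0:ℝ) ≤ 2 * |R i j|)
        linarith
      have hlow : ((K i : ℝ) + 1) / N ≤ ‖w i - z j‖ := by
        rw [hKceil i hi]
        calc ((⌈2 * |R i j|⌉₊ : ℝ)) / N ≤ 4 * |R i j| / N := by gcongr
          _ ≤ ‖w i - z j‖ := hchord i j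
      have hKpos : (0:ℝ) < ((K i : ℝ) + 1) / N := by positivity
      have hrp := Real.rpow_le_rpow (le_of_lt hKpos) hlow (le_of_lt hp0)
      have habs_pos : (0:ℝ) < (((K i : ℝ) + 1) / N) ^ p := Real.rpow_pos_of_pos hKpos p
      have h1 : 1 / ‖w i - z j‖ ^ p ≤ 1 / ((((K i : ℝ) + 1) / N) ^ p) :=
        one_div_le_one_div_of_le habs_pos hrp
      calc 1 / ‖w i - z j‖ ^ p ≤ 1 / ((((K i : ℝ) + 1) / N) ^ p) := h1
        _ = G (K i) := by
            rw [Real.div_rpow (by positivity) (le_of_lt hN'), hG]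
            rw [one_div_div]
            rw [div_eq_mul_one_div]
    have hfiber : ∀ k ∈ good.image K, (good.filter (fun i => K i = k)).card ≤ 2 := by
      intro k _
      have hinj : Set.InjOn (fun i => decide (0 ≤ R i j))
          ↑(good.filter (fun i => K i = k)) := by
        intro i hi i' hi' hsign
        simp only [Finset.coe_filter, Set.mem_setOf_eq, Finset.mem_coe] at hi hi'
        obtain ⟨hig, hik⟩ := hi
        obtain ⟨hig', hik'⟩ := hi'
        have h12 : (1:ℝ)/2 ≤ |R i j| := by
          rw [hgood, Finset.mem_filter] at hig; exact hig.2 j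
        have h12' : (1:ℝ)/2 ≤ |R i' j| := by
          rw [hgood, Finset.mem_filter] at hig'; exact hig'.2 j
        have hc1 : ((K i : ℝ) + 1) = (⌈2 * |R i j|⌉₊ : ℝ) := hKceil i hig
        have hc2 : ((K i' : ℝ) + 1) = (⌈2 * |R i' j|⌉₊ : ℝ) := hKceil i' hig'
        have hub1 : 2 * |R i j| ≤ (K i : ℝ) + 1 := by rw [hc1]; exact Nat.le_ceil _
        have hub2 : 2 * |R i' j| ≤ (K i' : ℝ) + 1 := by rw [hc2]; exact Nat.le_ceil _
        have hlb1 : ((K i : ℝ)) < 2 * |R i j| := by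
          by_contra hcon
          push_neg at hcon
          have : (⌈2 * |R i j|⌉₊ : ℕ) ≤ K i := Nat.ceil_le.2 (by exact_mod_cast hcon)
          have : ((⌈2 * |R i j|⌉₊ : ℕ) : ℝ) ≤ (K i : ℝ) := by exact_mod_cast this
          rw [← hc1] at this
          linarith
        have hlb2 : ((K i' : ℝ)) < 2 * |R i' j| := by
          by_contra hcon
          push_neg at hcon
          have : (⌈2 * |R i' j|⌉₊ : ℕ) ≤ K i' := Nat.ceil_le.2 (by exact_mod_cast hcon)
          have : ((⌈2 * |R i' j|⌉₊ : ℕ) : ℝ) ≤ (K i' : ℝ) := by exact_mod_cast this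
          rw [← hc2] at this
          linarith
        have hKeq : (K i : ℝ) = (K i' : ℝ) := by rw [hik, hik']
        have habs_close : |R i j| - |R i' j| < 1/2 ∧ |R i' j| - |R i j| < 1/2 := by
          constructor <;> nlinarith
        have hsign' : (0 ≤ R i j) ↔ (0 ≤ R i' j) := by
          simpa [decide_eq_decide] using hsign
        have hdiff : |R i j - R i' j| < 1 := by
          by_cases hs : 0 ≤ R i j
          · have hs' : 0 ≤ R i' j := hsign'.1 hs
            rw [abs_of_nonneg hs, abs_of_nonneg hs'] at habs_close
            rw [abs_lt]
            exact ⟨by linarith [habs_close.2], by linarith [habs_close.1]⟩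
          · push_neg at hs
            have hs' : R i' j < 0 := by
              by_contra h'
              push_neg at h'
              exact absurd (hsign'.2 h') (not_le.2 hs)
            rw [abs_of_neg hs, abs_of_neg hs'] at habs_close
            rw [abs_lt]
            exact ⟨by linarith [habs_close.1], by linarith [habs_close.2]⟩
        exact Fin.ext (rr_inj hN _ i.isLt i'.isLt hdiff)
      calc (good.filter (fun i => K i = k)).card
          ≤ (Finset.univ : Finset Bool).card := Finset.card_le_card_of_injOn _
            (fun i _ => Finset.mem_univ _) hinj
        _ = 2 := by simp
    calc ∑ i ∈ good, 1 / ‖w i - z j‖ ^ p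
        ≤ ∑ i ∈ good, G (K i) := Finset.sum_le_sum hstep1
      _ = ∑ k ∈ good.image K, (good.filter (fun i => K i = k)).card • G k :=
          Finset.sum_comp G K
      _ ≤ ∑ k ∈ good.image K, 2 * G k := by
          apply Finset.sum_le_sum
          intro k hk
          rw [nsmul_eq_mul]
          exact mul_le_mul_of_nonneg_right (by exact_mod_cast hfiber k hk) (hG0 k)
      _ = 2 * ∑ k ∈ good.image K, G k := by rw [Finset.mul_sum]
      _ ≤ 2 * ∑' k, G k := by
          apply mul_le_mul_of_nonneg_left _ (by norm_num : (0:ℝ) ≤ 2)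
          exact hGsummable.sum_le_tsum _ (fun k _ => hG0 k)
      _ = 2 * ((N:ℝ) ^ p * T) := by rw [hG, tsum_mul_left, hT]
  -- assemble
  set C := (3 * Real.exp 1) ^ p * T * (n : ℝ) ^ p with hC
  have hC0 : 0 ≤ C := by positivity
  have hN5 : (N:ℝ) ≤ 5 * n := by
    rw [hNdef]
    push_cast
    have : (1:ℝ) ≤ n := by exact_mod_cast hn
    linarith
  have h5e : (5:ℝ) ≤ 3 * Real.exp 1 := by
    have := Real.add_one_le_exp (1:ℝ)
    linarith
  have hNp : (N:ℝ) ^ p ≤ (3 * Real.exp 1) ^ p * (n:ℝ) ^ p := by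
    calc (N:ℝ) ^ p ≤ ((3 * Real.exp 1) * n) ^ p := by
          apply Real.rpow_le_rpow (le_of_lt hN') _ (le_of_lt hp0)
          have := mul_le_mul_of_nonneg_right h5e (Nat.cast_nonneg n : (0:ℝ) ≤ n)
          linarith
      _ = (3 * Real.exp 1) ^ p * (n:ℝ) ^ p :=
          Real.mul_rpow (by positivity) (Nat.cast_nonneg n)
  have hsum : ∑ i ∈ good, (∑ j, 1 / ‖w i - z j‖ ^ p) ≤ ∑ i ∈ good, C := by
    rw [Finset.sum_comm]
    calc ∑ j, ∑ i ∈ good, 1 / ‖w i - z j‖ ^ p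
        ≤ ∑ _j : Fin n, 2 * ((N:ℝ) ^ p * T) := Finset.sum_le_sum (fun j _ => hperj j)
      _ = n * (2 * ((N:ℝ) ^ p * T)) := by
          rw [Finset.sum_const, Finset.card_univ, Fintype.card_fin, nsmul_eq_mul]
      _ ≤ n * (2 * (((3 * Real.exp 1) ^ p * (n:ℝ) ^ p) * T)) := by
          apply mul_le_mul_of_nonneg_left _ (Nat.cast_nonneg n)
          apply mul_le_mul_of_nonneg_left _ (by norm_num : (0:ℝ) ≤ 2)
          exact mul_le_mul_of_nonneg_right hNp hT0
      _ ≤ (3 * n : ℝ) * C := by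
          rw [hC]
          have ha : 0 ≤ (n:ℝ) * ((3 * Real.exp 1) ^ p * (n:ℝ) ^ p * T) := by positivity
          nlinarith [ha]
      _ ≤ (good.card : ℝ) * C := by
          apply mul_le_mul_of_nonneg_right _ hC0
          have : (3 * n : ℕ) ≤ good.card := by omega
          exact_mod_cast by exact_mod_cast this
      _ = ∑ _i ∈ good, C := by rw [Finset.sum_const, nsmul_eq_mul]
  obtain ⟨i, hig, hile⟩ := Finset.exists_le_of_sum_le hgoodne hsum
  exact ⟨w i, hw1 i, hile⟩
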